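/- For the generating functions F_k of plane trees with edge labels in {+1,-1} (F_k(t, x_1,...,x_k) = sum over such labelled plane trees T of t^{|T|} prod_{i=1}^k sum_{v in T} x_i^{l(v)}, |T| = number of edges, root labelled 0), one has the recursion F_k(x) = 1 + t sum over subsets I of [k] of (prod_{i in I} x_i^{-1} + prod_{i in I} x_i) F_{|I|}(x_I) F_{|J|}(x_J), where J = [k] \ I. -/

import Mathlib

open Complex

/-- Plane trees whose edges carry labels `±1` (`true` for `+1`, `false` for `-1`):
a node together with the ordered list of its labelled subtrees.  The induced node
labelling gives the root label `0` and each child the label of its parent plus the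
edge increment; this is the family `𝒯⁽¹⁾` of labelled plane trees. -/
inductive PTree1 where
  | node : List (Bool × PTree1) → PTree1

mutual
/-- Number of edges. -/
def PTree1.edges : PTree1 → ℕ
  | .node cs => PTree1.edgesList cs
def PTree1.edgesList : List (Bool × PTree1) → ℕ
  | [] => 0
  | (_, t) :: rest => t.edges + 1 + PTree1.edgesList rest
end

mutual
/-- `∑_{v ∈ T} x^{ℓ(v)}` for the induced labelling (root labelled `0`). -/
noncomputable def PTree1.labelSum : PTree1 → ℂ → ℂ
  | .node cs, x => 1 + PTree1.labelSumList cs x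
noncomputable def PTree1.labelSumList : List (Bool × PTree1) → ℂ → ℂ
  | [], _ => 0
  | (b, t) :: rest, x =>
      (if b then x else x⁻¹) * t.labelSum x + PTree1.labelSumList rest x
end

namespace PTree1

mutual
def encode : PTree1 → List (Option Bool)
  | .node cs => encodeList cs
def encodeList : List (Bool × PTree1) → List (Option Bool)
  | [] => []
  | (b, t) :: rest => some b :: (encode t ++ none :: encodeList rest)
end

@[simp] lemma edges_node (cs : List (Bool × PTree1)) :
    (PTree1.node cs).edges = edgesList cs := rfl

@[simp] lemma encode_node (cs : List (Bool × PTree1)) :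
    (PTree1.node cs).encode = encodeList cs := rfl

def bal (l : List (Option Bool)) : ℤ :=
  (l.map fun o => if o.isSome then (1 : ℤ) else -1).sum

@[simp] lemma bal_nil : bal [] = 0 := rfl
@[simp] lemma bal_cons (o : Option Bool) (l : List (Option Bool)) :
    bal (o :: l) = (if o.isSome then (1:ℤ) else -1) + bal l := by simp [bal]
@[simp] lemma bal_append (a b : List (Option Bool)) :
    bal (a ++ b) = bal a + bal b := by simp [bal]

lemma prefix_append_cases {α : Type*} {p a b : List α} (h : p <+: a ++ b) :
    p <+: a ∨ ∃ q, p = a ++ q ∧ q <+: b := by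
  obtain ⟨s, hs⟩ := h
  rcases List.append_eq_append_iff.1 hs with ⟨a', h1, h2⟩ | ⟨c', h1, h2⟩
  · left; exact ⟨a', h1.symm⟩
  · right; exact ⟨c', h1, ⟨s, h2.symm⟩⟩

lemma bal_encodeList_prefix :
    ∀ (n : ℕ) (cs : List (Bool × PTree1)), edgesList cs ≤ n →
      bal (encodeList cs) = 0 ∧ ∀ p, p <+: encodeList cs → 0 ≤ bal p := by
  intro n
  induction n with
  | zero =>
    rintro (_ | ⟨⟨b, t⟩, rest⟩) h
    · refine ⟨rfl, fun p hp => ?_⟩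
      have hp0 : p = [] := List.prefix_nil.1 (by simpa [encodeList] using hp)
      subst hp0; simp
    · exfalso; simp [edgesList] at h
  | succ n ih =>
    rintro (_ | ⟨⟨b, t⟩, rest⟩) h
    · refine ⟨rfl, fun p hp => ?_⟩
      have hp0 : p = [] := List.prefix_nil.1 (by simpa [encodeList] using hp)
      subst hp0; simp
    · obtain ⟨cst⟩ := t
      have hh : edgesList cst + 1 + edgesList rest ≤ n + 1 := by
        simpa [edgesList] using h
      obtain ⟨ib1, ip1⟩ := ih cst (by omega)
      obtain ⟨ib2, ip2⟩ := ih rest (by omega)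
      constructor
      · simp [encodeList, ib1, ib2]
      · intro p hp
        rw [encodeList] at hp
        rcases p with _ | ⟨o, p'⟩
        · simp
        · obtain ⟨ho, hp'⟩ := List.cons_prefix_cons.1 hp
          subst ho
          rcases prefix_append_cases hp' with h' | ⟨q, rfl, hq⟩
          · have h0 := ip1 p' (by simpa using h')
            simp only [bal_cons, Option.isSome_some, if_pos]
            omega
          · rcases q with _ | ⟨o2, q⟩
            · simp [ib1]
            · obtain ⟨ho2, hq'⟩ := List.cons_prefix_cons.1 hq
              subst ho2
              have h0 := ip2 q hq'
              simp only [bal_cons, bal_append, encode_node, ib1, Option.isSome_some,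
                Option.isSome_none, if_pos, Bool.false_eq_true, if_neg, if_false]
              omega

lemma encodeList_no_ext {cs1 cs2 : List (Bool × PTree1)} {a'' : List (Option Bool)}
    (h1 : encodeList cs2 = encodeList cs1 ++ none :: a'') : False := by
  obtain ⟨ib1, _⟩ := bal_encodeList_prefix (edgesList cs1) cs1 le_rfl
  obtain ⟨_, ip2⟩ := bal_encodeList_prefix (edgesList cs2) cs2 le_rfl
  have hpre : (encodeList cs1 ++ [none]) <+: encodeList cs2 :=
    ⟨a'', by simp [h1]⟩
  have h0 := ip2 _ hpre
  simp [ib1] at h0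

lemma encode_split {t1 t2 : PTree1} {r1 r2 : List (Option Bool)}
    (h : encode t1 ++ none :: r1 = encode t2 ++ none :: r2) :
    encode t1 = encode t2 ∧ r1 = r2 := by
  obtain ⟨cs1⟩ := t1; obtain ⟨cs2⟩ := t2
  simp only [encode_node] at h ⊢
  rcases List.append_eq_append_iff.1 h with ⟨a', h1, h2⟩ | ⟨c', h1, h2⟩
  · rcases a' with _ | ⟨o, a''⟩
    · simp at h1 h2
      exact ⟨h1.symm, by simpa using h2⟩
    · rw [List.cons_append] at h2
      injection h2 with ho h2'
      subst ho
      exact absurd h1 (fun hh => encodeList_no_ext hh)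
  · rcases c' with _ | ⟨o, c''⟩
    · simp at h1 h2
      exact ⟨h1, by simpa using h2.symm⟩
    · rw [List.cons_append] at h2
      injection h2 with ho h2'
      subst ho
      exact absurd h1 (fun hh => encodeList_no_ext hh)

lemma encodeList_injAux :
    ∀ (n : ℕ) (cs1 cs2 : List (Bool × PTree1)), edgesList cs1 ≤ n →
      encodeList cs1 = encodeList cs2 → cs1 = cs2 := by
  intro n
  induction n with
  | zero =>
    rintro (_ | ⟨⟨b1, t1⟩, r1⟩) (_ | ⟨⟨b2, t2⟩, r2⟩) h he
    · rfl
    · exact absurd he (by simp [encodeList])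
    · exact absurd he (by simp [encodeList])
    · exfalso; simp [edgesList] at h
  | succ n ih =>
    rintro (_ | ⟨⟨b1, t1⟩, r1⟩) (_ | ⟨⟨b2, t2⟩, r2⟩) h he
    · rfl
    · exact absurd he (by simp [encodeList])
    · exact absurd he (by simp [encodeList])
    · rw [encodeList, encodeList] at he
      injection he with hb he'
      rw [Option.some.injEq] at hb
      subst hb
      obtain ⟨he1, he2⟩ := encode_split he'
      obtain ⟨c1⟩ := t1; obtain ⟨c2⟩ := t2
      have hh : edgesList c1 + 1 + edgesList r1 ≤ n + 1 := by
        simpa [edgesList] using h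
      have hc : c1 = c2 := ih c1 c2 (by omega) (by simpa using he1)
      have hr : r1 = r2 := ih r1 r2 (by omega) he2
      rw [hc, hr]

lemma encode_injective : Function.Injective encode := by
  intro a b h
  obtain ⟨ca⟩ := a; obtain ⟨cb⟩ := b
  rw [encodeList_injAux (edgesList ca) ca cb le_rfl (by simpa using h)]

lemma prod_map_encodeList (u v : ℝ) :
    ∀ (n : ℕ) (cs : List (Bool × PTree1)), edgesList cs ≤ n →
      ((encodeList cs).map fun o => if o.isSome then u else v).prod
        = (u * v) ^ edgesList cs := by
  intro n
  induction n with
  | zero =>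
    rintro (_ | ⟨⟨b, t⟩, rest⟩) h
    · simp [encodeList, edgesList]
    · exfalso; simp [edgesList] at h
  | succ n ih =>
    rintro (_ | ⟨⟨b, t⟩, rest⟩) h
    · simp [encodeList, edgesList]
    · obtain ⟨cst⟩ := t
      have hh : edgesList cst + 1 + edgesList rest ≤ n + 1 := by
        simpa [edgesList] using h
      rw [encodeList]
      simp only [List.map_cons, List.map_append, List.prod_cons, List.prod_append,
        encode_node, List.map_cons, List.prod_cons]
      rw [ih cst (by omega), ih rest (by omega)]
      have : edgesList ((b, node cst) :: rest) = edgesList cst + 1 + edgesList rest := by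
        simp [edgesList]
      rw [this]
      simp only [Option.isSome_some, Option.isSome_none, if_pos, Bool.false_eq_true, if_false]
      rw [pow_add, pow_add, pow_one]
      ring

lemma norm_labelSumList_le {x : ℂ} (hx : ‖x‖ = 1) :
    ∀ (n : ℕ) (cs : List (Bool × PTree1)), edgesList cs ≤ n →
      ‖labelSumList cs x‖ ≤ (edgesList cs : ℝ) := by
  intro n
  induction n with
  | zero =>
    rintro (_ | ⟨⟨b, t⟩, rest⟩) h
    · simp [labelSumList, edgesList]
    · exfalso; simp [edgesList] at h
  | succ n ih =>
    rintro (_ | ⟨⟨b, t⟩, rest⟩) h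
    · simp [labelSumList, edgesList]
    · obtain ⟨cst⟩ := t
      have hh : edgesList cst + 1 + edgesList rest ≤ n + 1 := by
        simpa [edgesList] using h
      have hx' : ‖(if b then x else x⁻¹)‖ = 1 := by
        rcases b with _ | _ <;> simp [hx]
      have h1 := ih cst (by omega)
      have h2 := ih rest (by omega)
      have hA : ‖(node cst).labelSum x‖ ≤ 1 + (edgesList cst : ℝ) := by
        rw [labelSum]
        refine (norm_add_le _ _).trans ?_
        rw [norm_one]
        linarith
      rw [labelSumList]
      calc ‖(if b then x else x⁻¹) * (node cst).labelSum x + labelSumList rest x‖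
          ≤ ‖(if b then x else x⁻¹) * (node cst).labelSum x‖ + ‖labelSumList rest x‖ :=
            norm_add_le _ _
        _ = ‖(node cst).labelSum x‖ + ‖labelSumList rest x‖ := by
            rw [norm_mul, hx', one_mul]
        _ ≤ (1 + (edgesList cst : ℝ)) + (edgesList rest : ℝ) := by linarith
        _ ≤ (edgesList ((b, node cst) :: rest) : ℝ) := by
            have : edgesList ((b, node cst) :: rest) = edgesList cst + 1 + edgesList rest := by
              simp [edgesList]
            rw [this]
            push_cast
            linarith

lemma norm_labelSum_le {x : ℂ} (hx : ‖x‖ = 1) (T : PTree1) :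
    ‖T.labelSum x‖ ≤ (T.edges : ℝ) + 1 := by
  obtain ⟨cs⟩ := T
  have h1 := norm_labelSumList_le hx (edgesList cs) cs le_rfl
  rw [labelSum, edges_node]
  calc ‖(1 : ℂ) + labelSumList cs x‖ ≤ ‖(1:ℂ)‖ + ‖labelSumList cs x‖ := norm_add_le _ _
    _ ≤ (edgesList cs : ℝ) + 1 := by rw [norm_one]; linarith

lemma summable_lists {q : ℝ} (hq0 : 0 ≤ q) (hq1 : q < 1) :
    Summable (fun l : List (Option Bool) =>
      (l.map fun o => if o.isSome then q/4 else q/2).prod) := by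
  set w : Option Bool → ℝ := fun o => if o.isSome then q/4 else q/2 with hw
  have hwn : ∀ o, 0 ≤ w o := by
    intro o; rcases o with _ | b <;> simp [hw] <;> linarith
  rw [← (List.equivSigmaTuple (α := Option Bool)).symm.summable_iff]
  have hfib : ∀ (s : (n : ℕ) × (Fin n → Option Bool)),
      ((List.equivSigmaTuple.symm s).map w).prod = ∏ i, w (s.2 i) := by
    rintro ⟨n, f⟩
    simp [List.equivSigmaTuple, List.map_ofFn, List.prod_ofFn, Function.comp]
  rw [show ((fun l : List (Option Bool) => (l.map w).prod) ∘ List.equivSigmaTuple.symm)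
      = fun s : (n : ℕ) × (Fin n → Option Bool) => ∏ i, w (s.2 i) from funext hfib]
  rw [summable_sigma_of_nonneg (by
    rintro ⟨n, f⟩
    exact Finset.prod_nonneg fun i _ => hwn _)]
  constructor
  · intro n; exact Summable.of_finite
  · have hsum : ∀ n : ℕ, (∑' f : Fin n → Option Bool, ∏ i, w (f i)) = q ^ n := by
      intro n
      rw [tsum_fintype, ← Fintype.prod_sum (κ := fun _ : Fin n => Option Bool) (fun _ o => w o)]
      have : (∑ o : Option Bool, w o) = q := by
        rw [Fintype.sum_option]
        simp [hw]
        ring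
      rw [this, Finset.prod_const, Finset.card_univ, Fintype.card_fin]
    rw [show (fun n : ℕ => ∑' f : Fin n → Option Bool, ∏ i, w (f i)) = fun n => q ^ n from
      funext hsum]
    exact summable_geometric_of_lt_one hq0 hq1

lemma master_summable (k : ℕ) {t : ℝ} (ht0 : 0 < t) (ht : t < 1/8) :
    Summable (fun T : PTree1 => t ^ T.edges * ((T.edges : ℝ) + 1) ^ k) := by
  set r : ℝ := (8*t + 1)/2 with hrdef
  have hr0 : 0 < r := by positivity
  have hr1 : r < 1 := by rw [hrdef]; linarith
  have hrt : 8*t < r := by rw [hrdef]; linarith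
  set q : ℝ := Real.sqrt r with hqdef
  have hq0 : 0 < q := Real.sqrt_pos.2 hr0
  have hq1 : q < 1 := by
    rw [hqdef]
    rw [show (1:ℝ) = Real.sqrt 1 by simp]
    exact Real.sqrt_lt_sqrt (le_of_lt hr0) hr1
  have hqq : q * q = r := Real.mul_self_sqrt (le_of_lt hr0)
  set ρ : ℝ := 8 * t / r with hρdef
  have hρ0 : 0 < ρ := by positivity
  have hρ1 : ρ < 1 := by rw [hρdef, div_lt_one hr0]; exact hrt
  -- summable bound sequence
  have hbs : Summable (fun n : ℕ => ((n : ℝ) + 1) ^ k * ρ ^ n) := by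
    have he : ∀ n : ℕ, ((n : ℝ) + 1) ^ k * ρ ^ n
        = ∑ m ∈ Finset.range (k+1), ((n:ℝ)^m * ρ^n * (k.choose m : ℝ)) := by
      intro n
      rw [add_pow, Finset.sum_mul]
      congr 1
      ext m
      ring
    rw [funext he]
    apply summable_sum
    intro m _
    exact (summable_pow_mul_geometric_of_norm_lt_one (R := ℝ) m
      (by rw [Real.norm_eq_abs, abs_of_pos hρ0]; exact hρ1)).mul_right _
  set C : ℝ := ∑' n : ℕ, ((n : ℝ) + 1) ^ k * ρ ^ n with hCdef
  have hC : ∀ n : ℕ, ((n : ℝ) + 1) ^ k * ρ ^ n ≤ C := by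
    intro n
    exact hbs.le_tsum n (fun j _ => by positivity)
  -- the dominating function on lists
  have hls := (summable_lists (le_of_lt hq0) hq1).mul_left C
  have hcomp := hls.comp_injective PTree1.encode_injective
  apply Summable.of_nonneg_of_le (fun T => by positivity) _ hcomp
  intro T
  obtain ⟨cs⟩ := T
  show t ^ (node cs).edges * (((node cs).edges : ℝ) + 1) ^ k
      ≤ C * (((node cs).encode).map fun o => if o.isSome then q/4 else q/2).prod
  rw [encode_node, edges_node,
    prod_map_encodeList (q/4) (q/2) (edgesList cs) cs le_rfl]
  have hqv : q/4 * (q/2) = r/8 := by rw [← hqq]; ring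
  rw [hqv]
  have expand : t ^ edgesList cs = ρ ^ edgesList cs * (r/8) ^ edgesList cs := by
    rw [← mul_pow]
    congr 1
    field_simp [hρdef]
    rw [hρdef, div_mul_cancel₀ _ hr0.ne']; ring
  rw [expand]
  have := hC (edgesList cs)
  have h8 : (0:ℝ) < (r/8) ^ edgesList cs := by positivity
  calc ρ ^ edgesList cs * (r / 8) ^ edgesList cs * ((edgesList cs : ℝ) + 1) ^ k
      = (((edgesList cs : ℝ) + 1) ^ k * ρ ^ edgesList cs) * (r/8) ^ edgesList cs := by ring
    _ ≤ C * (r/8) ^ edgesList cs := by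
        apply mul_le_mul_of_nonneg_right (hC _) (le_of_lt h8)

lemma summable_norm_F {k : ℕ} (x : Fin k → ℂ) (hx : ∀ i, ‖x i‖ = 1)
    {t : ℝ} (ht0 : 0 < t) (ht : t < 1/8) (I : Finset (Fin k)) :
    Summable (fun T : PTree1 => ‖(t : ℂ) ^ T.edges * ∏ i ∈ I, T.labelSum (x i)‖) := by
  apply Summable.of_nonneg_of_le (fun T => norm_nonneg _) _ (master_summable k ht0 ht)
  intro T
  rw [norm_mul, norm_pow]
  have h1 : ‖(t : ℂ)‖ = t := by
    rw [Complex.norm_real, Real.norm_eq_abs, abs_of_pos ht0]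
  rw [h1]
  have hprod : ‖∏ i ∈ I, T.labelSum (x i)‖ ≤ ((T.edges : ℝ) + 1) ^ k := by
    rw [norm_prod]
    calc ∏ i ∈ I, ‖T.labelSum (x i)‖ ≤ ∏ _i ∈ I, ((T.edges : ℝ) + 1) :=
          Finset.prod_le_prod (fun i _ => norm_nonneg _)
            (fun i _ => norm_labelSum_le (hx i) T)
      _ = ((T.edges : ℝ) + 1) ^ I.card := Finset.prod_const _
      _ ≤ ((T.edges : ℝ) + 1) ^ k := by
          apply pow_le_pow_right₀ (le_add_of_nonneg_left (Nat.cast_nonneg _))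
          calc I.card ≤ Fintype.card (Fin k) := Finset.card_le_univ I
            _ = k := Fintype.card_fin k
  calc t ^ T.edges * ‖∏ i ∈ I, T.labelSum (x i)‖
      ≤ t ^ T.edges * ((T.edges : ℝ) + 1) ^ k := by
        apply mul_le_mul_of_nonneg_left hprod (by positivity)

/-- First-child decomposition of a labelled plane tree. -/
def decomp : PTree1 ≃ Option (Bool × PTree1 × PTree1) where
  toFun T :=
    match T with
    | .node [] => none
    | .node ((b, s) :: cs) => some (b, s, .node cs)
  invFun o :=
    match o with
    | none => .node []
    | some (b, s, .node cs) => .node ((b, s) :: cs)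
  left_inv T := by rcases T with ⟨_ | ⟨⟨b, s⟩, cs⟩⟩ <;> rfl
  right_inv o := by rcases o with _ | ⟨b, s, ⟨cs⟩⟩ <;> rfl

lemma tsum_option' {β : Type*} (f : Option β → ℂ) (hf : Summable f) :
    ∑' o, f o = f none + ∑' b, f (some b) := by
  classical
  rw [hf.tsum_eq_add_tsum_ite none]
  congr 1
  have hinj : Function.Injective (some : β → Option β) := Option.some_injective β
  have hsupp : Function.support (fun o : Option β => if o = none then 0 else f o)
      ⊆ Set.range (some : β → Option β) := by
    rintro (_ | b) ho
    · simp at ho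
    · exact ⟨b, rfl⟩
  have := hinj.tsum_eq (f := fun o : Option β => if o = none then 0 else f o) hsupp
  rw [← this]
  simp

end PTree1


set_option maxHeartbeats 1000000 in
open PTree1 in
/-- The recursion for the generating functions
`F_k(t,x₁,…,x_k) = ∑_T t^{|T|} ∏_{i=1}^k ∑_{v∈T} x_i^{ℓ(v)}` of plane trees with
edge increments `±1`:
`F_k(x) = 1 + t ∑_{I ⊆ [k]} (∏_{i∈I} x_i⁻¹ + ∏_{i∈I} x_i) F_{|I|}(x_I) F_{|J|}(x_J)`,
with `J = [k] ∖ I`. -/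
theorem Fk_plane_pm1_recursion (k : ℕ) (x : Fin k → ℂ) (hx : ∀ i, ‖x i‖ = 1)
    (t : ℝ) (ht0 : 0 < t) (ht : t < 1/8) :
    (∑' T : PTree1, (t : ℂ)^T.edges * ∏ i : Fin k, T.labelSum (x i))
    = 1 + t * ∑ I : Finset (Fin k),
        ((∏ i ∈ I, (x i)⁻¹) + ∏ i ∈ I, x i)
        * (∑' T : PTree1, (t : ℂ)^T.edges * ∏ i ∈ I, T.labelSum (x i))
        * (∑' T : PTree1, (t : ℂ)^T.edges * ∏ i ∈ Iᶜ, T.labelSum (x i)) := by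
  classical
  have hnormI : ∀ I : Finset (Fin k),
      Summable (fun T : PTree1 => ‖(t : ℂ) ^ T.edges * ∏ i ∈ I, T.labelSum (x i)‖) :=
    fun I => summable_norm_F x hx ht0 ht I
  have hsumI : ∀ I : Finset (Fin k),
      Summable (fun T : PTree1 => (t : ℂ) ^ T.edges * ∏ i ∈ I, T.labelSum (x i)) :=
    fun I => (hnormI I).of_norm
  have hsumf : Summable (fun T : PTree1 => (t : ℂ) ^ T.edges * ∏ i : Fin k, T.labelSum (x i)) :=
    hsumI Finset.univ
  have hgsum : Summable (fun o : Option (Bool × PTree1 × PTree1) =>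
      (t : ℂ) ^ (decomp.symm o).edges * ∏ i : Fin k, (decomp.symm o).labelSum (x i)) :=
    hsumf.comp_injective decomp.symm.injective
  -- norm-summability helpers for products
  have hcnorm : ∀ I : Finset (Fin k),
      Summable (fun b : Bool => ‖∏ i ∈ I, (if b then x i else (x i)⁻¹)‖) :=
    fun I => Summable.of_finite
  have hABnorm : ∀ I : Finset (Fin k),
      Summable (fun z : PTree1 × PTree1 =>
        ‖((t : ℂ) ^ z.1.edges * ∏ i ∈ I, z.1.labelSum (x i))
          * ((t : ℂ) ^ z.2.edges * ∏ i ∈ Iᶜ, z.2.labelSum (x i))‖) := by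
    intro I
    have hn1 : Summable (fun T : PTree1 =>
        ‖‖(t : ℂ) ^ T.edges * ∏ i ∈ I, T.labelSum (x i)‖‖) :=
      (hnormI I).congr fun T => (norm_norm _).symm
    have hn2 : Summable (fun T : PTree1 =>
        ‖‖(t : ℂ) ^ T.edges * ∏ i ∈ Iᶜ, T.labelSum (x i)‖‖) :=
      (hnormI Iᶜ).congr fun T => (norm_norm _).symm
    have h1 : Summable (fun z : PTree1 × PTree1 =>
        ‖(t : ℂ) ^ z.1.edges * ∏ i ∈ I, z.1.labelSum (x i)‖
          * ‖(t : ℂ) ^ z.2.edges * ∏ i ∈ Iᶜ, z.2.labelSum (x i)‖) :=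
      summable_mul_of_summable_norm (R := ℝ)
        (f := fun T : PTree1 => ‖(t : ℂ) ^ T.edges * ∏ i ∈ I, T.labelSum (x i)‖)
        (g := fun T : PTree1 => ‖(t : ℂ) ^ T.edges * ∏ i ∈ Iᶜ, T.labelSum (x i)‖)
        hn1 hn2
    exact h1.congr fun z => (norm_mul _ _).symm
  have hsummand : ∀ I : Finset (Fin k),
      Summable (fun p : Bool × PTree1 × PTree1 =>
        (t : ℂ) * ((∏ i ∈ I, (if p.1 then x i else (x i)⁻¹))
          * (((t : ℂ) ^ p.2.1.edges * ∏ i ∈ I, p.2.1.labelSum (x i))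
            * ((t : ℂ) ^ p.2.2.edges * ∏ i ∈ Iᶜ, p.2.2.labelSum (x i))))) := by
    intro I
    have h2 : Summable (fun p : Bool × PTree1 × PTree1 =>
        (∏ i ∈ I, (if p.1 then x i else (x i)⁻¹))
          * (((t : ℂ) ^ p.2.1.edges * ∏ i ∈ I, p.2.1.labelSum (x i))
            * ((t : ℂ) ^ p.2.2.edges * ∏ i ∈ Iᶜ, p.2.2.labelSum (x i)))) :=
      summable_mul_of_summable_norm
        (f := fun b : Bool => ∏ i ∈ I, (if b then x i else (x i)⁻¹))
        (g := fun z : PTree1 × PTree1 =>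
          ((t : ℂ) ^ z.1.edges * ∏ i ∈ I, z.1.labelSum (x i))
            * ((t : ℂ) ^ z.2.edges * ∏ i ∈ Iᶜ, z.2.labelSum (x i)))
        (hcnorm I) (hABnorm I)
    exact h2.mul_left _
  -- the key pointwise identity
  have key : ∀ (b : Bool) (s u : PTree1),
      (t : ℂ) ^ (decomp.symm (some (b, s, u))).edges
          * ∏ i : Fin k, (decomp.symm (some (b, s, u))).labelSum (x i)
        = ∑ I : Finset (Fin k),
            (t : ℂ) * ((∏ i ∈ I, (if b then x i else (x i)⁻¹))
              * (((t : ℂ) ^ s.edges * ∏ i ∈ I, s.labelSum (x i))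
                * ((t : ℂ) ^ u.edges * ∏ i ∈ Iᶜ, u.labelSum (x i)))) := by
    intro b s u
    obtain ⟨cs⟩ := u
    show (t : ℂ) ^ (node ((b, s) :: cs)).edges
          * ∏ i : Fin k, (node ((b, s) :: cs)).labelSum (x i) = _
    have hedge : (node ((b, s) :: cs)).edges = s.edges + 1 + (node cs).edges := by
      simp [edgesList]
    have hls : ∀ i : Fin k, (node ((b, s) :: cs)).labelSum (x i)
        = (if b then x i else (x i)⁻¹) * s.labelSum (x i) + (node cs).labelSum (x i) := by
      intro i
      simp only [labelSum, labelSumList]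
      ring
    rw [hedge, Finset.prod_congr rfl (fun i _ => hls i)]
    rw [Fintype.prod_add, Finset.mul_sum]
    apply Finset.sum_congr rfl
    intro I _
    rw [Finset.prod_mul_distrib, pow_add, pow_add, pow_one]
    ring
  -- evaluation of each inner tsum
  have hI : ∀ I : Finset (Fin k),
      (∑' p : Bool × PTree1 × PTree1,
        (t : ℂ) * ((∏ i ∈ I, (if p.1 then x i else (x i)⁻¹))
          * (((t : ℂ) ^ p.2.1.edges * ∏ i ∈ I, p.2.1.labelSum (x i))
            * ((t : ℂ) ^ p.2.2.edges * ∏ i ∈ Iᶜ, p.2.2.labelSum (x i)))))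
      = (t : ℂ) * (((∏ i ∈ I, (x i)⁻¹) + ∏ i ∈ I, x i)
          * ((∑' T : PTree1, (t : ℂ) ^ T.edges * ∏ i ∈ I, T.labelSum (x i))
            * (∑' T : PTree1, (t : ℂ) ^ T.edges * ∏ i ∈ Iᶜ, T.labelSum (x i)))) := by
    intro I
    rw [tsum_mul_left]
    congr 1
    have e1 : (∑' b : Bool, ∏ i ∈ I, (if b then x i else (x i)⁻¹))
        * (∑' z : PTree1 × PTree1,
            ((t : ℂ) ^ z.1.edges * ∏ i ∈ I, z.1.labelSum (x i))
              * ((t : ℂ) ^ z.2.edges * ∏ i ∈ Iᶜ, z.2.labelSum (x i)))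
        = ∑' p : Bool × (PTree1 × PTree1),
            (∏ i ∈ I, (if p.1 then x i else (x i)⁻¹))
              * (((t : ℂ) ^ p.2.1.edges * ∏ i ∈ I, p.2.1.labelSum (x i))
                * ((t : ℂ) ^ p.2.2.edges * ∏ i ∈ Iᶜ, p.2.2.labelSum (x i))) :=
      tsum_mul_tsum_of_summable_norm
        (f := fun b : Bool => ∏ i ∈ I, (if b then x i else (x i)⁻¹))
        (g := fun z : PTree1 × PTree1 =>
          ((t : ℂ) ^ z.1.edges * ∏ i ∈ I, z.1.labelSum (x i))
            * ((t : ℂ) ^ z.2.edges * ∏ i ∈ Iᶜ, z.2.labelSum (x i)))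
        (hcnorm I) (hABnorm I)
    have e2 : (∑' T : PTree1, (t : ℂ) ^ T.edges * ∏ i ∈ I, T.labelSum (x i))
        * (∑' T : PTree1, (t : ℂ) ^ T.edges * ∏ i ∈ Iᶜ, T.labelSum (x i))
        = ∑' z : PTree1 × PTree1,
            ((t : ℂ) ^ z.1.edges * ∏ i ∈ I, z.1.labelSum (x i))
              * ((t : ℂ) ^ z.2.edges * ∏ i ∈ Iᶜ, z.2.labelSum (x i)) :=
      tsum_mul_tsum_of_summable_norm
        (f := fun T : PTree1 => (t : ℂ) ^ T.edges * ∏ i ∈ I, T.labelSum (x i))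
        (g := fun T : PTree1 => (t : ℂ) ^ T.edges * ∏ i ∈ Iᶜ, T.labelSum (x i))
        (hnormI I) (hnormI Iᶜ)
    have e3 : (∑' b : Bool, ∏ i ∈ I, (if b then x i else (x i)⁻¹))
        = (∏ i ∈ I, (x i)⁻¹) + ∏ i ∈ I, x i := by
      rw [tsum_fintype, Fintype.sum_bool]
      simp [add_comm]
    rw [e2, ← e3, e1]
  -- assemble
  calc (∑' T : PTree1, (t : ℂ) ^ T.edges * ∏ i : Fin k, T.labelSum (x i))
      = ∑' o : Option (Bool × PTree1 × PTree1),
          (t : ℂ) ^ (decomp.symm o).edges * ∏ i : Fin k, (decomp.symm o).labelSum (x i) :=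
        (Equiv.tsum_eq decomp.symm _).symm
    _ = ((t : ℂ) ^ (decomp.symm (none : Option (Bool × PTree1 × PTree1))).edges
            * ∏ i : Fin k, (decomp.symm (none : Option (Bool × PTree1 × PTree1))).labelSum (x i))
        + ∑' p : Bool × PTree1 × PTree1,
            (t : ℂ) ^ (decomp.symm (some p)).edges
              * ∏ i : Fin k, (decomp.symm (some p)).labelSum (x i) :=
        tsum_option' _ hgsum
    _ = 1 + ∑' p : Bool × PTree1 × PTree1,
            ∑ I : Finset (Fin k),
              (t : ℂ) * ((∏ i ∈ I, (if p.1 then x i else (x i)⁻¹))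
                * (((t : ℂ) ^ p.2.1.edges * ∏ i ∈ I, p.2.1.labelSum (x i))
                  * ((t : ℂ) ^ p.2.2.edges * ∏ i ∈ Iᶜ, p.2.2.labelSum (x i)))) := by
        congr 1
        · show (t : ℂ) ^ (node []).edges * ∏ i : Fin k, (node []).labelSum (x i) = 1
          simp [labelSum, labelSumList, edgesList]
        · exact tsum_congr fun p => key p.1 p.2.1 p.2.2
    _ = 1 + ∑ I : Finset (Fin k),
          ∑' p : Bool × PTree1 × PTree1,
            (t : ℂ) * ((∏ i ∈ I, (if p.1 then x i else (x i)⁻¹))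
              * (((t : ℂ) ^ p.2.1.edges * ∏ i ∈ I, p.2.1.labelSum (x i))
                * ((t : ℂ) ^ p.2.2.edges * ∏ i ∈ Iᶜ, p.2.2.labelSum (x i)))) := by
        congr 1
        exact Summable.tsum_finsetSum fun I _ => hsummand I
    _ = 1 + ∑ I : Finset (Fin k),
          (t : ℂ) * (((∏ i ∈ I, (x i)⁻¹) + ∏ i ∈ I, x i)
            * ((∑' T : PTree1, (t : ℂ) ^ T.edges * ∏ i ∈ I, T.labelSum (x i))
              * (∑' T : PTree1, (t : ℂ) ^ T.edges * ∏ i ∈ Iᶜ, T.labelSum (x i)))) := by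
        congr 1
        exact Finset.sum_congr rfl fun I _ => hI I
    _ = 1 + t * ∑ I : Finset (Fin k),
          ((∏ i ∈ I, (x i)⁻¹) + ∏ i ∈ I, x i)
          * (∑' T : PTree1, (t : ℂ) ^ T.edges * ∏ i ∈ I, T.labelSum (x i))
          * (∑' T : PTree1, (t : ℂ) ^ T.edges * ∏ i ∈ Iᶜ, T.labelSum (x i)) := by
        rw [Finset.mul_sum]
        congr 1
        exact Finset.sum_congr rfl fun I _ => by ring
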